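/- Let R₀, R₁, R₂ ∈ ℂ^{n×n} be Hermitian positive semi-definite, J ∈ ℂ^{n×n} skew-Hermitian, and assume ker R₀ ∩ ker R₁ ∩ ker R₂ ∩ ker J = {0}. Then the bivariate matrix polynomial (z₁,z₂) ↦ z₁z₂R₂ + z₂(J+R₁) + R₀ is stable with respect to H², where H = {z ∈ ℂ : Re z > 0}: for all μ₁, μ₂ ∈ H and x ∈ ℂ^n \ {0}, (μ₁μ₂R₂ + μ₂(J+R₁) + R₀)x ≠ 0. Consequently P(λ) = λ²R₂ + λ(J+R₁) + R₀ is hyperstable with respect to the open right half-plane. -/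

import Mathlib

/-- `P` is hyperstable with respect to `D`. -/
def Hyperstable {n : ℕ} (P : ℂ → Matrix (Fin n) (Fin n) ℂ) (D : Set ℂ) : Prop :=
  ∀ x : Fin n → ℂ, x ≠ 0 → ∃ y : Fin n → ℂ, y ≠ 0 ∧
    ∀ μ ∈ D, dotProduct (star y) ((P μ).mulVec x) ≠ 0

lemma scalar_aux (μ₁ μ₂ : ℂ) (h₁ : 0 < μ₁.re) (h₂ : 0 < μ₂.re)
    (c₀ c₁ c₂ j : ℂ) (hc₀ : 0 ≤ c₀.re) (hi₀ : c₀.im = 0)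
    (hc₁ : 0 ≤ c₁.re) (hi₁ : c₁.im = 0)
    (hc₂ : 0 ≤ c₂.re) (hi₂ : c₂.im = 0) (hj : j.re = 0)
    (heq : μ₁ * μ₂ * c₂ + μ₂ * j + μ₂ * c₁ + c₀ = 0) :
    c₀ = 0 ∧ c₁ = 0 ∧ c₂ = 0 := by
  have h' : ((starRingEnd ℂ μ₂) * (μ₁ * μ₂ * c₂ + μ₂ * j + μ₂ * c₁ + c₀)).re = 0 := by
    rw [heq]; simp
  simp only [Complex.mul_re, Complex.mul_im, Complex.add_re, Complex.add_im,
    Complex.conj_re, Complex.conj_im, hi₀, hi₁, hi₂, hj] at h'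
  have hn : 0 < μ₂.re * μ₂.re + μ₂.im * μ₂.im := by nlinarith
  refine ⟨?_, ?_, ?_⟩ <;> apply Complex.ext <;>
    simp [hi₀, hi₁, hi₂] <;>
    nlinarith [mul_nonneg (mul_nonneg hn.le h₁.le) hc₂, mul_nonneg hn.le hc₁,
      mul_nonneg h₂.le hc₀, mul_pos hn h₁, mul_pos hn h₂]

open scoped ComplexOrder in
lemma core {n : ℕ} (R₀ R₁ R₂ J : Matrix (Fin n) (Fin n) ℂ)
    (hR₀ : R₀.PosSemidef) (hR₁ : R₁.PosSemidef) (hR₂ : R₂.PosSemidef)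
    (hJ : J.conjTranspose = -J)
    (μ₁ μ₂ : ℂ) (h₁ : 0 < μ₁.re) (h₂ : 0 < μ₂.re) (x : Fin n → ℂ)
    (h0 : dotProduct (star x) ((((μ₁ * μ₂) • R₂ + μ₂ • (J + R₁) + R₀)).mulVec x) = 0) :
    R₀.mulVec x = 0 ∧ R₁.mulVec x = 0 ∧ R₂.mulVec x = 0 := by
  set c₀ := dotProduct (star x) (R₀.mulVec x) with hc₀def
  set c₁ := dotProduct (star x) (R₁.mulVec x) with hc₁def
  set c₂ := dotProduct (star x) (R₂.mulVec x) with hc₂def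
  set j := dotProduct (star x) (J.mulVec x) with hjdef
  have hjre : j.re = 0 := by
    have hst : starRingEnd ℂ j = -j := by
      have e : j = star (dotProduct (star (J.mulVec x)) x) := Matrix.star_dotProduct x _
      calc starRingEnd ℂ j = dotProduct (star (J.mulVec x)) x := by rw [e]; exact star_star _
        _ = -j := by
          rw [Matrix.star_mulVec, hJ, ← Matrix.dotProduct_mulVec, hjdef]
          simp [Matrix.neg_mulVec]
    have := congrArg Complex.re hst
    simp at this
    linarith
  have hc₀ := Complex.nonneg_iff.mp (hR₀.dotProduct_mulVec_nonneg x)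
  have hc₁ := Complex.nonneg_iff.mp (hR₁.dotProduct_mulVec_nonneg x)
  have hc₂ := Complex.nonneg_iff.mp (hR₂.dotProduct_mulVec_nonneg x)
  have hexp : μ₁ * μ₂ * c₂ + μ₂ * j + μ₂ * c₁ + c₀ = 0 := by
    rw [← h0]
    simp [Matrix.add_mulVec, Matrix.smul_mulVec, dotProduct_add,
      dotProduct_smul, smul_eq_mul, hc₀def, hc₁def, hc₂def, hjdef]
    ring
  obtain ⟨e₀, e₁, e₂⟩ := scalar_aux μ₁ μ₂ h₁ h₂ c₀ c₁ c₂ j hc₀.1 hc₀.2.symm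
    hc₁.1 hc₁.2.symm hc₂.1 hc₂.2.symm hjre hexp
  exact ⟨(hR₀.dotProduct_mulVec_zero_iff x).mp e₀,
    (hR₁.dotProduct_mulVec_zero_iff x).mp e₁,
    (hR₂.dotProduct_mulVec_zero_iff x).mp e₂⟩

open scoped ComplexOrder in
theorem stmt17 {n : ℕ} (R₀ R₁ R₂ J : Matrix (Fin n) (Fin n) ℂ)
    (hR₀ : R₀.PosSemidef) (hR₁ : R₁.PosSemidef) (hR₂ : R₂.PosSemidef)
    (hJ : J.conjTranspose = -J)
    (hker : ∀ x : Fin n → ℂ, R₀.mulVec x = 0 → R₁.mulVec x = 0 → R₂.mulVec x = 0 →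
      J.mulVec x = 0 → x = 0) :
    (∀ μ₁ μ₂ : ℂ, 0 < μ₁.re → 0 < μ₂.re → ∀ x : Fin n → ℂ, x ≠ 0 →
      ((μ₁ * μ₂) • R₂ + μ₂ • (J + R₁) + R₀).mulVec x ≠ 0) ∧
    Hyperstable (fun μ => μ ^ 2 • R₂ + μ • (J + R₁) + R₀) {z : ℂ | 0 < z.re} := by
  constructor
  · intro μ₁ μ₂ h₁ h₂ x hx hmv
    have h0 : dotProduct (star x)
        ((((μ₁ * μ₂) • R₂ + μ₂ • (J + R₁) + R₀)).mulVec x) = 0 := by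
      rw [hmv]; simp
    obtain ⟨e₀, e₁, e₂⟩ := core R₀ R₁ R₂ J hR₀ hR₁ hR₂ hJ μ₁ μ₂ h₁ h₂ x h0
    have hμ₂ : μ₂ ≠ 0 := fun h => by simp [h] at h₂
    have hJx : J.mulVec x = 0 := by
      have := hmv
      rw [Matrix.add_mulVec, Matrix.add_mulVec, Matrix.smul_mulVec,
        Matrix.smul_mulVec, Matrix.add_mulVec, e₀, e₁, e₂] at this
      simpa [hμ₂] using this
    exact hx (hker x e₀ e₁ e₂ hJx)
  · intro x hx
    by_cases hall : R₀.mulVec x = 0 ∧ R₁.mulVec x = 0 ∧ R₂.mulVec x = 0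
    · have hJx : J.mulVec x ≠ 0 := fun h => hx (hker x hall.1 hall.2.1 hall.2.2 h)
      refine ⟨J.mulVec x, hJx, fun μ hμ => ?_⟩
      have hμ : (0:ℝ) < μ.re := hμ
      have hμ0 : μ ≠ 0 := fun h => by simp [h] at hμ
      have : dotProduct (star (J.mulVec x))
          ((μ ^ 2 • R₂ + μ • (J + R₁) + R₀).mulVec x)
          = μ * dotProduct (star (J.mulVec x)) (J.mulVec x) := by
        rw [Matrix.add_mulVec, Matrix.add_mulVec, Matrix.smul_mulVec,
          Matrix.smul_mulVec, Matrix.add_mulVec, hall.1, hall.2.1, hall.2.2]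
        simp [dotProduct_smul, smul_eq_mul]
      rw [this]
      exact mul_ne_zero hμ0 (fun h => hJx (dotProduct_star_self_eq_zero.mp h))
    · refine ⟨x, hx, fun μ hμ h0 => ?_⟩
      have hμ : (0:ℝ) < μ.re := hμ
      have h0' : dotProduct (star x)
          ((((μ * μ) • R₂ + μ • (J + R₁) + R₀)).mulVec x) = 0 := by
        rw [← h0]; ring_nf
      obtain ⟨e₀, e₁, e₂⟩ := core R₀ R₁ R₂ J hR₀ hR₁ hR₂ hJ μ μ hμ hμ x h0'
      exact hall ⟨e₀, e₁, e₂⟩
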